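/- Let G be a bipartite graph on n vertices whose edges are colored red, blue, and purple, and let U be the set of vertices v with d_p(v) < d(v)/2 and d_b(v), d_r(v) ≥ η·d(v) (where d_b, d_r, d_p denote blue-, red-, purple-degree and 0 < η < 1/4). Let e_U = Σ_{v∈U} d(v). If e_U ≥ (20/η^{1/2})·n^{3/2}, then G contains at least (η²/100)·e_U⁴/n⁴ four-cycles xuyv with u, v ∈ U such that xu, xv are red and uy, vy are blue. -/

import Mathlib

/-- The degree of `v` in `G`, as a real number. -/
noncomputable def deg {V : Type*} (G : SimpleGraph V) (v : V) : ℝ :=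
  ((G.neighborSet v).ncard : ℝ)

/-- The set `U` of vertices `v` with `d_p(v) < d(v)/2` and `d_b(v), d_r(v) ≥ η·d(v)`,
where the edges of `G = R ⊔ B ⊔ P` are colored red, blue, purple. -/
def Uset {V : Type*} (R B P : SimpleGraph V) (η : ℝ) : Set V :=
  {v | deg P v < deg (R ⊔ B ⊔ P) v / 2 ∧
    η * deg (R ⊔ B ⊔ P) v ≤ deg B v ∧ η * deg (R ⊔ B ⊔ P) v ≤ deg R v}

open Finset

private lemma ite_and_mul_nat (p q : Prop) [Decidable p] [Decidable q] :
    (if p ∧ q then (1 : ℕ) else 0) = (if p then 1 else 0) * (if q then 1 else 0) := by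
  split_ifs with h h1 h2 <;> simp_all

/-- counting quadruples (x,u,y,v) with C x y u and C x y v -/
private lemma count_quads {V : Type*} [Fintype V] (C : V → V → V → Prop)
    [∀ x y u, Decidable (C x y u)] :
    ((Finset.univ.filter fun q : V × V × V × V =>
        C q.1 q.2.2.1 q.2.1 ∧ C q.1 q.2.2.1 q.2.2.2).card) =
      ∑ x : V, ∑ y : V, ((Finset.univ.filter fun u => C x y u).card) ^ 2 := by
  rw [Finset.card_filter]
  rw [Fintype.sum_prod_type]
  refine Finset.sum_congr rfl fun x _ => ?_
  rw [Fintype.sum_prod_type]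
  rw [Finset.sum_comm (s := (univ : Finset V)) (t := (univ : Finset (V × V)))
    (f := fun u p => if C x p.1 u ∧ C x p.1 p.2 then (1:ℕ) else 0)]
  rw [Fintype.sum_prod_type]
  refine Finset.sum_congr rfl fun y _ => ?_
  simp only [ite_and_mul_nat]
  rw [Finset.sum_comm (s := (univ : Finset V)) (t := (univ : Finset V))
    (f := fun v u => (if C x y u then (1:ℕ) else 0) * (if C x y v then (1:ℕ) else 0))]
  rw [← Finset.sum_mul_sum Finset.univ Finset.univ
    (fun u => if C x y u then (1 : ℕ) else 0) (fun v => if C x y v then (1 : ℕ) else 0)]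
  rw [Finset.card_filter, sq]

/-- counting triples (x,u,y) with C x y u -/
private lemma count_triples {V : Type*} [Fintype V] (C : V → V → V → Prop)
    [∀ x y u, Decidable (C x y u)] :
    ((Finset.univ.filter fun t : V × V × V => C t.1 t.2.2 t.2.1).card) =
      ∑ x : V, ∑ y : V, ((Finset.univ.filter fun u => C x y u).card) := by
  rw [Finset.card_filter, Fintype.sum_prod_type]
  refine Finset.sum_congr rfl fun x _ => ?_
  rw [Fintype.sum_prod_type, Finset.sum_comm]
  refine Finset.sum_congr rfl fun y _ => ?_
  rw [Finset.card_filter]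

set_option maxHeartbeats 1600000

theorem stmt_19 {V : Type*} [Fintype V] (R B P : SimpleGraph V) (η : ℝ)
    (hη0 : 0 < η) (hη4 : η < 1 / 4)
    (hbip : (R ⊔ B ⊔ P).Colorable 2)
    (hRB : Disjoint R.edgeSet B.edgeSet)
    (hRP : Disjoint R.edgeSet P.edgeSet)
    (hBP : Disjoint B.edgeSet P.edgeSet)
    (heU : (20 / Real.sqrt η) * (Fintype.card V : ℝ) ^ ((3 : ℝ) / 2) ≤
      ∑ v : V, (Uset R B P η).indicator (deg (R ⊔ B ⊔ P)) v) :
    (η ^ 2 / 100) * (∑ v : V, (Uset R B P η).indicator (deg (R ⊔ B ⊔ P)) v) ^ 4 /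
        (Fintype.card V : ℝ) ^ 4 ≤
      ({q : V × V × V × V | q.2.1 ∈ Uset R B P η ∧ q.2.2.2 ∈ Uset R B P η ∧
          q.2.1 ≠ q.2.2.2 ∧ q.1 ≠ q.2.2.1 ∧
          R.Adj q.1 q.2.1 ∧ R.Adj q.1 q.2.2.2 ∧
          B.Adj q.2.1 q.2.2.1 ∧ B.Adj q.2.2.2 q.2.2.1}.ncard : ℝ) := by
  classical
  -- trivial case : V empty
  rcases Nat.eq_zero_or_pos (Fintype.card V) with hn0 | hnpos
  · have hempty : IsEmpty V := Fintype.card_eq_zero_iff.mp hn0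
    have h0 : (∑ v : V, (Uset R B P η).indicator (deg (R ⊔ B ⊔ P)) v) = 0 := by simp
    rw [h0]
    refine le_trans ?_ (Nat.cast_nonneg _)
    norm_num
  set G := R ⊔ B ⊔ P with hGdef
  set Uc : Set V := Uset R B P η with hUc
  set n : ℕ := Fintype.card V with hn
  set N : ℝ := (n : ℝ) with hNdef
  have hN0 : (0 : ℝ) < N := by
    rw [hNdef]; exact_mod_cast hnpos
  -- degrees as finset cards
  have hdeg : ∀ (H : SimpleGraph V) (v : V),
      deg H v = ((Finset.univ.filter fun w => H.Adj v w).card : ℝ) := by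
    intro H v
    rw [deg, Set.ncard_eq_toFinset_card']
    congr 2
    ext w
    simp
  have hdeg' : ∀ (H : SimpleGraph V) (v : V),
      deg H v = ((Finset.univ.filter fun w => H.Adj w v).card : ℝ) := by
    intro H v
    rw [hdeg]
    congr 2
    ext w
    simp [SimpleGraph.adj_comm]
  have hdeg0 : ∀ (H : SimpleGraph V) (v : V), 0 ≤ deg H v := by
    intro H v; rw [hdeg]; positivity
  -- key pointwise bound on U
  have hU : ∀ u ∈ Uc, η / 4 * (deg G u) ^ 2 ≤ deg R u * deg B u := by
    intro u hu
    obtain ⟨h1, h2, h3⟩ : deg P u < deg G u / 2 ∧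
        η * deg G u ≤ deg B u ∧ η * deg G u ≤ deg R u := hu
    have hsub : deg G u ≤ deg R u + deg B u + deg P u := by
      have hset : G.neighborSet u ⊆ R.neighborSet u ∪ B.neighborSet u ∪ P.neighborSet u := by
        intro w hw
        simp only [SimpleGraph.mem_neighborSet, hGdef, SimpleGraph.sup_adj] at hw
        simp only [Set.mem_union, SimpleGraph.mem_neighborSet]
        tauto
      have h4 := Set.ncard_le_ncard hset (Set.toFinite _)
      have h5 := Set.ncard_union_le (R.neighborSet u ∪ B.neighborSet u) (P.neighborSet u)
      have h6 := Set.ncard_union_le (R.neighborSet u) (B.neighborSet u)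
      have hnat : (G.neighborSet u).ncard ≤ (R.neighborSet u).ncard
          + (B.neighborSet u).ncard + (P.neighborSet u).ncard :=
        le_trans h4 (le_trans h5 (Nat.add_le_add_right h6 _))
      rw [deg, deg, deg, deg]
      exact_mod_cast hnat
    have hd0 : 0 ≤ deg G u := hdeg0 G u
    have hB0 : 0 ≤ deg B u := hdeg0 B u
    have hR0 : 0 ≤ deg R u := hdeg0 R u
    rcases le_or_gt (deg B u) (deg G u / 4) with hb | hb
    · have ha : deg G u / 4 ≤ deg R u := by linarith
      calc η / 4 * deg G u ^ 2 = (η * deg G u) * (deg G u / 4) := by ring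
        _ ≤ deg B u * deg R u := mul_le_mul h2 ha (by linarith) hB0
        _ = deg R u * deg B u := mul_comm _ _
    · calc η / 4 * deg G u ^ 2 = (η * deg G u) * (deg G u / 4) := by ring
        _ ≤ deg R u * deg B u := mul_le_mul h3 (le_of_lt hb) (by linarith) hR0
  -- finset versions
  set Ufin : Finset V := Finset.univ.filter (· ∈ Uc) with hUfin
  set eU : ℝ := ∑ v : V, Uc.indicator (deg G) v with heUdef
  have heUsum : eU = ∑ u ∈ Ufin, deg G u := by
    rw [heUdef, hUfin, Finset.sum_filter]
    refine Finset.sum_congr rfl fun v _ => ?_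
    by_cases hv : v ∈ Uc <;> simp [Set.indicator, hv]
  have heU0 : 0 ≤ eU := by
    rw [heUsum]; exact Finset.sum_nonneg fun u _ => hdeg0 G u
  -- the counting predicate
  set C : V → V → V → Prop := fun x y u => u ∈ Uc ∧ R.Adj x u ∧ B.Adj u y with hC
  set m : V → V → ℕ := fun x y => (Finset.univ.filter fun u => C x y u).card with hm
  -- nat-degree functions
  set rd : V → ℕ := fun u => (Finset.univ.filter fun x => R.Adj x u).card with hrd
  set bd : V → ℕ := fun u => (Finset.univ.filter fun y => B.Adj u y).card with hbd
  have hrdeq : ∀ u, deg R u = (rd u : ℝ) := fun u => hdeg' R u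
  have hbdeq : ∀ u, deg B u = (bd u : ℝ) := fun u => hdeg B u
  -- sum of m = sum over U of rd * bd
  have hS1 : ∑ x : V, ∑ y : V, m x y = ∑ u ∈ Ufin, rd u * bd u := by
    rw [hUfin, Finset.sum_filter]
    simp only [hm, Finset.card_filter]
    have h1 : ∀ x : V, ∑ y : V, ∑ u : V, (if C x y u then (1:ℕ) else 0)
        = ∑ u : V, ∑ y : V, (if C x y u then (1:ℕ) else 0) := fun x => Finset.sum_comm
    simp only [h1]
    rw [Finset.sum_comm (s := (univ : Finset V)) (t := (univ : Finset V))
      (f := fun x u => ∑ y : V, (if C x y u then (1:ℕ) else 0))]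
    refine Finset.sum_congr rfl fun u _ => ?_
    by_cases hu : u ∈ Uc
    · have hiff : ∀ x y : V, C x y u ↔ (R.Adj x u ∧ B.Adj u y) := by
        intro x y
        rw [hC]
        simp [hu]
      have hsplit : ∀ x y : V, (if C x y u then (1:ℕ) else 0)
          = (if R.Adj x u then (1:ℕ) else 0) * (if B.Adj u y then (1:ℕ) else 0) := by
        intro x y
        rw [if_congr (hiff x y) rfl rfl, ite_and_mul_nat]
      simp only [hsplit, hu, if_true]
      rw [← Finset.sum_mul_sum Finset.univ Finset.univ
        (fun x => if R.Adj x u then (1:ℕ) else 0) (fun y => if B.Adj u y then (1:ℕ) else 0)]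
      have hrdu : rd u = ∑ x : V, (if R.Adj x u then (1:ℕ) else 0) := Finset.card_filter _ _
      have hbdu : bd u = ∑ y : V, (if B.Adj u y then (1:ℕ) else 0) := Finset.card_filter _ _
      rw [hrdu, hbdu]
    · have hzero : ∀ x y : V, (if C x y u then (1:ℕ) else 0) = 0 := by
        intro x y
        have hnc : ¬ C x y u := by rw [hC]; exact fun h => hu h.1
        rw [if_neg hnc]
      rw [if_neg hu]
      simp only [hzero, Finset.sum_const_zero]
  -- the quadruple and triple finsets
  set Qf : Finset (V × V × V × V) := Finset.univ.filter fun q =>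
    C q.1 q.2.2.1 q.2.1 ∧ C q.1 q.2.2.1 q.2.2.2 with hQf
  set Tf : Finset (V × V × V) := Finset.univ.filter fun t => C t.1 t.2.2 t.2.1 with hTf
  have hQcard : Qf.card = ∑ x : V, ∑ y : V, (m x y) ^ 2 := by
    rw [hQf, count_quads C]
  have hTcard : Tf.card = ∑ x : V, ∑ y : V, m x y := by
    rw [hTf, count_triples C]
  -- diagonal bound
  have hdiagle : (Qf.filter fun q => q.2.1 = q.2.2.2).card ≤ Tf.card := by
    apply Finset.card_le_card_of_injOn (fun q => (q.1, q.2.1, q.2.2.1))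
    · intro q hq
      rw [Finset.mem_coe, Finset.mem_filter] at hq
      rw [hQf, Finset.mem_filter] at hq
      rw [hTf, Finset.mem_coe, Finset.mem_filter]
      exact ⟨Finset.mem_univ _, hq.1.2.1⟩
    · rintro ⟨xa, ua, ya, va⟩ ha ⟨xb, ub, yb, vb⟩ hb h
      simp only [Finset.coe_filter, Set.mem_setOf_eq] at ha hb
      obtain ⟨-, ha2⟩ := ha
      obtain ⟨-, hb2⟩ := hb
      have ha2' : ua = va := ha2
      have hb2' : ub = vb := hb2
      simp only [Prod.mk.injEq] at h ⊢
      refine ⟨h.1, h.2.1, h.2.2, ?_⟩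
      rw [← ha2', ← hb2', h.2.1]
  -- split of Qf
  have hsplitcard : (Qf.filter fun q => q.2.1 = q.2.2.2).card
      + (Qf.filter fun q => ¬ (q.2.1 = q.2.2.2)).card = Qf.card :=
    Finset.card_filter_add_card_filter_not _
  -- every quadruple has x ≠ y
  have hxyne : ∀ q : V × V × V × V, C q.1 q.2.2.1 q.2.1 → q.1 ≠ q.2.2.1 := by
    intro q hc hxy
    have hr : R.Adj q.1 q.2.1 := hc.2.1
    have hb' : B.Adj q.2.1 q.2.2.1 := hc.2.2
    rw [hxy] at hr
    exact Set.disjoint_left.mp hRB (R.mem_edgeSet.mpr hr.symm) (B.mem_edgeSet.mpr hb')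
  -- identify the target set with a filter of Qf
  have htarget : ({q : V × V × V × V | q.2.1 ∈ Uc ∧ q.2.2.2 ∈ Uc ∧
          q.2.1 ≠ q.2.2.2 ∧ q.1 ≠ q.2.2.1 ∧
          R.Adj q.1 q.2.1 ∧ R.Adj q.1 q.2.2.2 ∧
          B.Adj q.2.1 q.2.2.1 ∧ B.Adj q.2.2.2 q.2.2.1}.ncard : ℝ)
      = ((Qf.filter fun q => ¬ (q.2.1 = q.2.2.2)).card : ℝ) := by
    congr 1
    rw [Set.ncard_eq_toFinset_card']
    congr 1
    ext q
    simp only [Set.mem_toFinset, Set.mem_setOf_eq, Finset.mem_filter, hQf, Finset.mem_univ,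
      true_and, hC]
    constructor
    · rintro ⟨h1, h2, h3, h4, h5, h6, h7, h8⟩
      exact ⟨⟨⟨h1, h5, h7⟩, ⟨h2, h6, h8⟩⟩, h3⟩
    · rintro ⟨⟨⟨h1, h2, h3⟩, ⟨h4, h5, h6⟩⟩, h7⟩
      exact ⟨h1, h4, h7, hxyne q ⟨h1, h2, h3⟩, h2, h5, h3, h6⟩
  rw [htarget]
  set T : ℝ := ((Qf.filter fun q => ¬ (q.2.1 = q.2.2.2)).card : ℝ) with hT
  have hT0 : 0 ≤ T := Nat.cast_nonneg _
  -- real versions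
  set P2 : ℝ := ∑ u ∈ Ufin, deg R u * deg B u with hP2
  have hP2cast : P2 = ((∑ u ∈ Ufin, rd u * bd u : ℕ) : ℝ) := by
    rw [hP2]
    push_cast
    exact Finset.sum_congr rfl fun u _ => by rw [hrdeq, hbdeq]
  have hP20 : 0 ≤ P2 := by rw [hP2cast]; exact Nat.cast_nonneg _
  -- count inequality over ℕ, cast to ℝ
  have hcount : ∑ x : V, ∑ y : V, ((m x y : ℝ)) ^ 2 ≤ T + P2 := by
    have hnat : ∑ x : V, ∑ y : V, (m x y) ^ 2 ≤
        (Qf.filter fun q => ¬ (q.2.1 = q.2.2.2)).card + ∑ u ∈ Ufin, rd u * bd u := by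
      rw [← hS1, ← hTcard, ← hQcard, ← hsplitcard]
      omega
    rw [hT, hP2cast]
    calc ∑ x : V, ∑ y : V, ((m x y : ℝ)) ^ 2
        = ((∑ x : V, ∑ y : V, (m x y) ^ 2 : ℕ) : ℝ) := by push_cast; rfl
      _ ≤ _ := by exact_mod_cast Nat.cast_le.mpr hnat
  -- sum of m as real = P2
  have hsm : ∑ x : V, ∑ y : V, (m x y : ℝ) = P2 := by
    rw [hP2cast, ← hS1]
    push_cast
    rfl
  -- Cauchy-Schwarz over pairs
  have hCS2 : P2 ^ 2 ≤ N ^ 2 * ∑ x : V, ∑ y : V, ((m x y : ℝ)) ^ 2 := by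
    have h := sq_sum_le_card_mul_sum_sq (s := (univ : Finset (V × V)))
      (f := fun p => (m p.1 p.2 : ℝ))
    rw [Finset.card_univ, Fintype.card_prod] at h
    calc P2 ^ 2 = (∑ p : V × V, (m p.1 p.2 : ℝ)) ^ 2 := by
          rw [← hsm, Fintype.sum_prod_type]
      _ ≤ (↑(n * n)) * ∑ p : V × V, ((m p.1 p.2 : ℝ)) ^ 2 := h
      _ = N ^ 2 * ∑ x : V, ∑ y : V, ((m x y : ℝ)) ^ 2 := by
          rw [Fintype.sum_prod_type, hNdef]
          push_cast
          ring
  -- Cauchy-Schwarz over U: lower bound for P2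
  have hCS1 : eU ^ 2 ≤ N * ∑ u ∈ Ufin, (deg G u) ^ 2 := by
    have h := sq_sum_le_card_mul_sum_sq (s := Ufin) (f := deg G)
    have hcard : (Ufin.card : ℝ) ≤ N := by
      rw [hNdef, hn]
      exact_mod_cast Finset.card_le_univ _
    have hsq0 : 0 ≤ ∑ u ∈ Ufin, (deg G u) ^ 2 :=
      Finset.sum_nonneg fun u _ => sq_nonneg _
    calc eU ^ 2 = (∑ u ∈ Ufin, deg G u) ^ 2 := by rw [heUsum]
      _ ≤ (Ufin.card : ℝ) * ∑ u ∈ Ufin, (deg G u) ^ 2 := h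
      _ ≤ N * ∑ u ∈ Ufin, (deg G u) ^ 2 := mul_le_mul_of_nonneg_right hcard hsq0
  have hP2lower : η / 4 * eU ^ 2 ≤ N * P2 := by
    have hsum_le : ∑ u ∈ Ufin, η / 4 * (deg G u) ^ 2 ≤ P2 := by
      rw [hP2]
      refine Finset.sum_le_sum fun u hu => ?_
      rw [hUfin, Finset.mem_filter] at hu
      exact hU u hu.2
    calc η / 4 * eU ^ 2 ≤ η / 4 * (N * ∑ u ∈ Ufin, (deg G u) ^ 2) :=
          mul_le_mul_of_nonneg_left hCS1 (by positivity)
      _ = N * ∑ u ∈ Ufin, η / 4 * (deg G u) ^ 2 := by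
          simp only [Finset.mul_sum]
          exact Finset.sum_congr rfl fun u _ => by ring
      _ ≤ N * P2 := mul_le_mul_of_nonneg_left hsum_le hN0.le
  -- define A
  set A : ℝ := η * eU ^ 2 / (4 * N) with hA
  have hAdef : 4 * A * N = η * eU ^ 2 := by
    rw [hA]; field_simp
  have hA1 : A ≤ P2 := by
    rw [hA, div_le_iff₀ (by positivity)]
    nlinarith [hP2lower]
  -- lower bound for A from heU
  have hA2 : 100 * N ^ 2 ≤ A := by
    have hx2 : ((N : ℝ) ^ ((3 : ℝ) / 2)) ^ 2 = N ^ 3 := by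
      rw [← Real.rpow_natCast (N ^ ((3 : ℝ) / 2)) 2, ← Real.rpow_mul hN0.le]
      norm_num
    have h20 : 0 ≤ 20 / Real.sqrt η * N ^ ((3 : ℝ) / 2) := by positivity
    have hsq := mul_self_le_mul_self h20 heU
    have hsqrt : Real.sqrt η * Real.sqrt η = η := Real.mul_self_sqrt hη0.le
    have hsqrt0 : 0 < Real.sqrt η := Real.sqrt_pos.mpr hη0
    have h400 : 400 / η * N ^ 3 ≤ eU ^ 2 := by
      have : (20 / Real.sqrt η * N ^ ((3 : ℝ) / 2)) * (20 / Real.sqrt η * N ^ ((3 : ℝ) / 2))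
          = 400 / η * N ^ 3 := by
        rw [show (20 / Real.sqrt η * N ^ ((3 : ℝ) / 2)) * (20 / Real.sqrt η * N ^ ((3 : ℝ) / 2))
            = (400 / (Real.sqrt η * Real.sqrt η)) * ((N ^ ((3 : ℝ) / 2)) ^ 2) by ring,
          hsqrt, hx2]
      rw [← this, pow_two]
      exact hsq
    rw [hA, le_div_iff₀ (by positivity)]
    have h400' : 400 * N ^ 3 ≤ η * eU ^ 2 := by
      have := mul_le_mul_of_nonneg_left h400 hη0.le
      calc 400 * N ^ 3 = η * (400 / η * N ^ 3) := by field_simp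
        _ ≤ η * eU ^ 2 := this
    nlinarith [h400']
  -- final arithmetic
  have hA0 : 0 ≤ A := le_trans (by positivity) hA2
  have hT3 : P2 ^ 2 ≤ N ^ 2 * (T + P2) := by
    calc P2 ^ 2 ≤ N ^ 2 * ∑ x : V, ∑ y : V, ((m x y : ℝ)) ^ 2 := hCS2
      _ ≤ N ^ 2 * (T + P2) := mul_le_mul_of_nonneg_left hcount (by positivity)
  have hPN : N ^ 2 ≤ P2 := by nlinarith [hA2, hA1, sq_nonneg N]
  have h4 : 99 / 100 * A ≤ P2 - N ^ 2 := by nlinarith [hA2, hA1]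
  have h5 : (99 / 100 * A) * A ≤ (P2 - N ^ 2) * P2 :=
    mul_le_mul h4 hA1 hA0 (by nlinarith [hPN, sq_nonneg N])
  have key : 16 * A ^ 2 ≤ 100 * (T * N ^ 2) := by nlinarith [hT3, h5]
  have hsq2 : (4 * A * N) ^ 2 = (η * eU ^ 2) ^ 2 := by rw [hAdef]
  rw [div_le_iff₀ (by positivity)]
  nlinarith [mul_le_mul_of_nonneg_right key (sq_nonneg N), hsq2]
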